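/- A linear map Λ on d×d complex matrices is completely positive if and only if its Choi matrix (I ⊗ Λ)(P_+) is positive semidefinite, which holds if and only if Λ can be written in Kraus form Λ(A) = Σ_i V_i A V_i† for finitely many matrices V_i. -/

import Mathlib

open scoped BigOperators ComplexConjugate ComplexOrder

open Matrix
noncomputable section

/-- The extension `(I_k ⊗ Λ)` of a map `Λ : M_d → M_{d'}`, acting blockwise
on matrices over `ℂ^k ⊗ ℂ^d`. -/
def matExt {d d' : ℕ} (k : ℕ) (Λ : Matrix (Fin d) (Fin d) ℂ → Matrix (Fin d') (Fin d') ℂ)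
    (ρ : Matrix (Fin k × Fin d) (Fin k × Fin d) ℂ) :
    Matrix (Fin k × Fin d') (Fin k × Fin d') ℂ :=
  fun p q => (Λ (Matrix.of fun i j => ρ (p.1, i) (q.1, j))) p.2 q.2

/-- The Choi matrix `(I ⊗ Λ)(P₊)` of `Λ : M_d → M_d`. -/
def choi {d : ℕ} (Λ : Matrix (Fin d) (Fin d) ℂ →ₗ[ℂ] Matrix (Fin d) (Fin d) ℂ) :
    Matrix (Fin d × Fin d) (Fin d × Fin d) ℂ :=
  fun p q => (1 / d : ℂ) * (Λ (Matrix.single p.1 q.1 1)) p.2 q.2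

/-- finite sums of PSD matrices are PSD -/
lemma psdSum {n ι : Type*} [Fintype n] (s : Finset ι) (f : ι → Matrix n n ℂ)
    (h : ∀ i ∈ s, (f i).PosSemidef) : (∑ i ∈ s, f i).PosSemidef :=
  Finset.sum_induction f _ (fun _ _ ha hb => ha.add hb) Matrix.PosSemidef.zero h

/-- Kraus implies CP -/
lemma kraus_cp {d : ℕ} (Λ : Matrix (Fin d) (Fin d) ℂ →ₗ[ℂ] Matrix (Fin d) (Fin d) ℂ)
    (m : ℕ) (V : Fin m → Matrix (Fin d) (Fin d) ℂ)
    (hV : ∀ A, Λ A = ∑ i, V i * A * (V i)ᴴ) :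
    ∀ k : ℕ, ∀ ρ : Matrix (Fin k × Fin d) (Fin k × Fin d) ℂ,
      ρ.PosSemidef → (matExt k (fun A => Λ A) ρ).PosSemidef := by
  intro k ρ hρ
  set W : Fin m → Matrix (Fin k × Fin d) (Fin k × Fin d) ℂ :=
    fun i => Matrix.of fun p q => if p.1 = q.1 then V i p.2 q.2 else 0 with hW
  have key : matExt k (fun A => Λ A) ρ = ∑ i, W i * ρ * (W i)ᴴ := by
    ext p q
    rw [Matrix.sum_apply]
    show (Λ (Matrix.of fun a b => ρ (p.1, a) (q.1, b))) p.2 q.2 = _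
    rw [hV, Matrix.sum_apply]
    refine Finset.sum_congr rfl fun i _ => ?_
    simp only [Matrix.mul_apply, Matrix.conjTranspose_apply, hW, Matrix.of_apply,
      Fintype.sum_prod_type, ite_mul, zero_mul, mul_ite, mul_zero,
      Finset.sum_ite_irrel, Finset.sum_const_zero,
      Finset.sum_ite_eq, Finset.mem_univ, if_true]
    rw [Finset.sum_comm]
    congr 1
    ext x
    rw [Finset.sum_eq_single q.1 (fun b _ hb => by simp [Ne.symm hb]) (by simp)]
    simp [Finset.sum_mul, Finset.mul_sum, mul_comm, mul_left_comm]
  rw [key]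
  exact psdSum _ _ fun i _ => hρ.mul_mul_conjTranspose_same (W i)

/-- CP implies Choi PSD -/
lemma cp_choi {d : ℕ} (hd : 0 < d) (Λ : Matrix (Fin d) (Fin d) ℂ →ₗ[ℂ] Matrix (Fin d) (Fin d) ℂ)
    (hCP : ∀ k : ℕ, ∀ ρ : Matrix (Fin k × Fin d) (Fin k × Fin d) ℂ,
      ρ.PosSemidef → (matExt k (fun A => Λ A) ρ).PosSemidef) :
    (choi Λ).PosSemidef := by
  classical
  set w : (Fin d × Fin d) → ℂ :=
    fun p => if p.1 = p.2 then (((Real.sqrt d)⁻¹ : ℝ) : ℂ) else 0 with hw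
  set r₀ : Fin d × Fin d := (⟨0, hd⟩, ⟨0, hd⟩) with hr₀
  set A : Matrix (Fin d × Fin d) (Fin d × Fin d) ℂ :=
    Matrix.of fun r q => if r = r₀ then conj (w q) else 0 with hA
  have hρ : (Aᴴ * A).PosSemidef := Matrix.posSemidef_conjTranspose_mul_self A
  have hentry : ∀ p q, (Aᴴ * A) p q = w p * conj (w q) := by
    intro p q
    rw [Matrix.mul_apply]
    rw [Finset.sum_eq_single r₀ (fun b _ hb => by simp [hA, Matrix.conjTranspose_apply, hb])
      (by simp)]
    simp [hA, Matrix.conjTranspose_apply]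
  have hchoi : choi Λ = matExt d (fun B => Λ B) (Aᴴ * A) := by
    ext p q
    show (1 / d : ℂ) * (Λ (Matrix.single p.1 q.1 1)) p.2 q.2
        = (Λ (Matrix.of fun i j => (Aᴴ * A) ((p.1, i)) ((q.1, j)))) p.2 q.2
    have hM : (Matrix.of fun i j => (Aᴴ * A) ((p.1, i)) ((q.1, j)))
        = (1 / d : ℂ) • Matrix.single p.1 q.1 1 := by
      ext i j
      have hkey : ((Real.sqrt d : ℂ))⁻¹ * ((Real.sqrt d : ℂ))⁻¹ = ((d : ℂ))⁻¹ := by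
        rw [← mul_inv, ← Complex.ofReal_mul, Real.mul_self_sqrt (by positivity)]
        push_cast
        ring
      rw [Matrix.of_apply, hentry]
      rw [hw, Matrix.smul_apply, smul_eq_mul]
      by_cases h1 : p.1 = i <;> by_cases h2 : q.1 = j
      · subst h1; subst h2
        simp [Matrix.single_apply_same, Complex.conj_ofReal, hkey]
      · simp [h1, h2, Matrix.single_apply_of_ne, Complex.conj_ofReal]
      · simp [h1, h2, Matrix.single_apply_of_ne]
      · simp [h1, h2, Matrix.single_apply_of_ne]
    rw [hM, _root_.map_smul]
    simp
  rw [hchoi]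
  exact hCP d _ hρ

open scoped MatrixOrder in
lemma psd_eq_conjTranspose_mul_self (n : ℕ) (M : Matrix (Fin n × Fin n) (Fin n × Fin n) ℂ)
    (h : M.PosSemidef) : ∃ B : Matrix (Fin n × Fin n) (Fin n × Fin n) ℂ, M = Bᴴ * B :=
  ⟨CFC.sqrt M, by rw [(CFC.sqrt_nonneg M).posSemidef.isHermitian.eq, CFC.sqrt_mul_sqrt_self M h.nonneg]⟩

/-- Choi PSD implies Kraus -/
lemma choi_kraus {d : ℕ} (hd : 0 < d)
    (Λ : Matrix (Fin d) (Fin d) ℂ →ₗ[ℂ] Matrix (Fin d) (Fin d) ℂ)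
    (h : (choi Λ).PosSemidef) :
    ∃ (m : ℕ) (V : Fin m → Matrix (Fin d) (Fin d) ℂ),
      ∀ A, Λ A = ∑ i, V i * A * (V i)ᴴ := by
  classical
  obtain ⟨B, hB⟩ := psd_eq_conjTranspose_mul_self _ _ h
  have hdC : (d : ℂ) ≠ 0 := Nat.cast_ne_zero.mpr hd.ne'
  have hΛE : ∀ (i j a b : Fin d), (Λ (Matrix.single i j 1)) a b
      = d * ∑ r : Fin d × Fin d, conj (B r (i, a)) * B r (j, b) := by
    intro i j a b
    have h1 : (1 / d : ℂ) * (Λ (Matrix.single i j 1)) a b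
        = ∑ r : Fin d × Fin d, conj (B r (i, a)) * B r (j, b) := by
      have h2 : choi Λ (i, a) (j, b) = (Bᴴ * B) (i, a) (j, b) := by rw [hB]
      simpa [choi, Matrix.mul_apply, Matrix.conjTranspose_apply] using h2
    rw [← h1, ← mul_assoc, mul_one_div, div_self hdC, one_mul]
  set V : Fin (d * d) → Matrix (Fin d) (Fin d) ℂ :=
    fun t => Matrix.of fun a i =>
      (Real.sqrt d : ℂ) * conj (B (finProdFinEquiv.symm t) (i, a)) with hVdef
  refine ⟨d * d, V, fun A => ?_⟩
  have hsq : (Real.sqrt d : ℂ) * (Real.sqrt d : ℂ) = (d : ℂ) := by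
    rw [← Complex.ofReal_mul, Real.mul_self_sqrt (by positivity)]
    push_cast
    ring
  ext a b
  have hLHS : (Λ A) a b
      = ∑ i : Fin d, ∑ j : Fin d, A i j * (Λ (Matrix.single i j 1)) a b := by
    conv_lhs => rw [Matrix.matrix_eq_sum_single A]
    rw [map_sum, Matrix.sum_apply]
    refine Finset.sum_congr rfl fun i _ => ?_
    rw [map_sum, Matrix.sum_apply]
    refine Finset.sum_congr rfl fun j _ => ?_
    have : Matrix.single i j (A i j) = A i j • Matrix.single i j 1 := by
      rw [Matrix.smul_single, smul_eq_mul, mul_one]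
    rw [this, _root_.map_smul, Matrix.smul_apply, smul_eq_mul]
  rw [hLHS, Matrix.sum_apply]
  rw [← Equiv.sum_comp finProdFinEquiv
    (fun t => (V t * A * (V t)ᴴ) a b)]
  simp only [hVdef, Matrix.mul_apply, Matrix.conjTranspose_apply, Matrix.of_apply,
    Equiv.symm_apply_apply, _root_.map_mul, Complex.conj_ofReal, RingHomCompTriple.comp_apply,
    RingHom.id_apply]
  simp only [hΛE]
  simp only [star_mul', RCLike.star_def, Complex.conj_conj, Complex.conj_ofReal,
    Finset.mul_sum, Finset.sum_mul]
  refine ((Finset.sum_congr rfl fun y _ => Finset.sum_comm).trans Finset.sum_comm).trans ?_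
  refine Finset.sum_congr rfl fun r _ => Finset.sum_comm.trans ?_
  refine Finset.sum_congr rfl fun y _ => Finset.sum_congr rfl fun x _ => ?_
  rw [← hsq]
  ring

/-- Choi's theorem: `Λ` is completely positive iff its Choi matrix is positive
semidefinite, which holds iff `Λ` admits a Kraus decomposition. -/
theorem choi_theorem (d : ℕ) (hd : 0 < d)
    (Λ : Matrix (Fin d) (Fin d) ℂ →ₗ[ℂ] Matrix (Fin d) (Fin d) ℂ) :
    ((∀ k : ℕ, ∀ ρ : Matrix (Fin k × Fin d) (Fin k × Fin d) ℂ,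
        ρ.PosSemidef → (matExt k (fun A => Λ A) ρ).PosSemidef) ↔ (choi Λ).PosSemidef) ∧
    ((choi Λ).PosSemidef ↔
      ∃ (m : ℕ) (V : Fin m → Matrix (Fin d) (Fin d) ℂ),
        ∀ A, Λ A = ∑ i, V i * A * (V i)ᴴ) := by
  constructor
  · constructor
    · exact cp_choi hd Λ
    · intro h
      obtain ⟨m, V, hV⟩ := choi_kraus hd Λ h
      exact kraus_cp Λ m V hV
  · constructor
    · exact choi_kraus hd Λ
    · rintro ⟨m, V, hV⟩
      exact cp_choi hd Λ (kraus_cp Λ m V hV)
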